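/- Let f : ℝⁿ → ℝ be differentiable with L-Lipschitz gradient, and let c : ℝⁿ → ℝᵐ be continuously differentiable on a convex set D with ‖J_c(x)‖ ≤ M_c and ‖J_c(x) − J_c(z)‖ ≤ L_c‖x − z‖ for all x, z ∈ D. Then for all x, z ∈ D, y ∈ ℝᵐ, and β > 0: (f(z) + (β/2)‖c(z) − y‖²) − (f(x) + (β/2)‖c(x) − y‖²) ≤ ⟨∇f(x) + β J_c(x)ᵀ(c(x) − y), z − x⟩ + ((L + (L_c‖c(x) − y‖ + M_c²)β)/2)·‖z − x‖². -/

import Mathlib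

open scoped RealInnerProductSpace

lemma taylor_aux {E G : Type*} [NormedAddCommGroup E] [NormedSpace ℝ E]
    [NormedAddCommGroup G] [NormedSpace ℝ G] [CompleteSpace G]
    (F : E → G) (F' : E → (E →L[ℝ] G)) (x z : E) (K : ℝ) (hK : 0 ≤ K)
    (hF : ∀ w, HasFDerivAt F (F' w) w)
    (hLip : ∀ s ∈ Set.Icc (0:ℝ) 1, ∀ t ∈ Set.Icc (0:ℝ) 1,
      ‖F' (x + t • (z - x)) - F' (x + s • (z - x))‖ ≤ K * |t - s| * ‖z - x‖) :
    ‖F z - F x - F' x (z - x)‖ ≤ K / 2 * ‖z - x‖ ^ 2 := by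
  set d := z - x with hd
  set γ : ℝ → E := fun t => x + t • d with hγ
  set g : ℝ → G := fun t => F (γ t) - t • (F' x d) with hgdef
  have hγ0 : γ 0 = x := by simp [hγ]
  have hγ1 : γ 1 = z := by simp [hγ, hd]
  have huIcc : Set.uIcc (0:ℝ) 1 = Set.Icc 0 1 := Set.uIcc_of_le (by norm_num)
  have hderiv : ∀ t ∈ Set.uIcc (0:ℝ) 1, HasDerivAt g (F' (γ t) d - F' x d) t := by
    intro t _
    have h1 : HasDerivAt γ d t := by
      simpa [hγ] using ((hasDerivAt_id t).smul_const d).const_add x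
    have h2 : HasDerivAt (fun t => F (γ t)) (F' (γ t) d) t :=
      (hF (γ t)).comp_hasDerivAt t h1
    have h3 : HasDerivAt (fun t : ℝ => t • (F' x d)) (F' x d) t := by
      simpa using (hasDerivAt_id t).smul_const (F' x d)
    exact h2.sub h3
  have hlipA : LipschitzOnWith (K * ‖d‖).toNNReal (fun t => F' (γ t)) (Set.Icc (0:ℝ) 1) := by
    rw [lipschitzOnWith_iff_dist_le_mul]
    intro t ht s hs
    have := hLip s hs t ht
    rw [dist_eq_norm, Real.coe_toNNReal _ (by positivity)]
    calc ‖F' (γ t) - F' (γ s)‖ ≤ K * |t - s| * ‖d‖ := this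
      _ = K * ‖d‖ * dist t s := by rw [Real.dist_eq]; ring
  have hcont : ContinuousOn (fun t => F' (γ t) d - F' x d) (Set.uIcc (0:ℝ) 1) := by
    rw [huIcc]
    exact ((hlipA.continuousOn.clm_apply continuousOn_const).sub continuousOn_const)
  have hftc : g 1 - g 0 = ∫ t in (0:ℝ)..1, (F' (γ t) d - F' x d) :=
    (intervalIntegral.integral_eq_sub_of_hasDerivAt hderiv
      (hcont.intervalIntegrable)).symm
  have hval : F z - F x - F' x d = g 1 - g 0 := by
    simp [hgdef, hγ0, hγ1]
    abel
  have hbound : ∀ t ∈ Set.Icc (0:ℝ) 1, ‖F' (γ t) d - F' x d‖ ≤ K * t * ‖d‖ ^ 2 := by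
    intro t ht
    have h1 : ‖F' (γ t) - F' x‖ ≤ K * t * ‖d‖ := by
      have h := hLip 0 (by norm_num) t ht
      simp only [zero_smul, add_zero, sub_zero, abs_of_nonneg ht.1] at h
      exact h
    calc ‖F' (γ t) d - F' x d‖ = ‖(F' (γ t) - F' x) d‖ := by simp
      _ ≤ ‖F' (γ t) - F' x‖ * ‖d‖ := (F' (γ t) - F' x).le_opNorm d
      _ ≤ (K * t * ‖d‖) * ‖d‖ := by
          apply mul_le_mul_of_nonneg_right h1 (norm_nonneg d)
      _ = K * t * ‖d‖ ^ 2 := by ring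
  have hint : ‖∫ t in (0:ℝ)..1, (F' (γ t) d - F' x d)‖ ≤ ∫ t in (0:ℝ)..1, K * t * ‖d‖ ^ 2 := by
    calc ‖∫ t in (0:ℝ)..1, (F' (γ t) d - F' x d)‖
        ≤ ∫ t in (0:ℝ)..1, ‖F' (γ t) d - F' x d‖ :=
          intervalIntegral.norm_integral_le_integral_norm (by norm_num)
      _ ≤ ∫ t in (0:ℝ)..1, K * t * ‖d‖ ^ 2 := by
          apply intervalIntegral.integral_mono_on (by norm_num)
          · rw [← huIcc] at *
            exact hcont.norm.intervalIntegrable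
          · apply Continuous.intervalIntegrable
            continuity
          · exact hbound
  have hintval : (∫ t in (0:ℝ)..1, K * t * ‖d‖ ^ 2) = K / 2 * ‖d‖ ^ 2 := by
    have : (fun t : ℝ => K * t * ‖d‖ ^ 2) = fun t : ℝ => (K * ‖d‖ ^ 2) * t := by
      funext t; ring
    rw [this, intervalIntegral.integral_const_mul, integral_id]
    ring
  rw [hval, hftc]
  rw [hintval] at hint
  exact hint

theorem stmt_9 (n m : ℕ)
    (f : EuclideanSpace ℝ (Fin n) → ℝ)
    (gradf : EuclideanSpace ℝ (Fin n) → EuclideanSpace ℝ (Fin n))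
    (c : EuclideanSpace ℝ (Fin n) → EuclideanSpace ℝ (Fin m))
    (Jc : EuclideanSpace ℝ (Fin n) → (EuclideanSpace ℝ (Fin n) →L[ℝ] EuclideanSpace ℝ (Fin m)))
    (D : Set (EuclideanSpace ℝ (Fin n))) (hD : Convex ℝ D)
    (L Lc Mc : ℝ) (hL : 0 < L) (hLc : 0 < Lc) (hMc : 0 < Mc)
    (hf : ∀ x, HasGradientAt f (gradf x) x)
    (hLip : ∀ x z, ‖gradf x - gradf z‖ ≤ L * ‖x - z‖)
    (hc : ∀ x, HasFDerivAt c (Jc x) x)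
    (hJb : ∀ x ∈ D, ‖Jc x‖ ≤ Mc)
    (hJLip : ∀ x ∈ D, ∀ z ∈ D, ‖Jc x - Jc z‖ ≤ Lc * ‖x - z‖) :
    ∀ x ∈ D, ∀ z ∈ D, ∀ (y : EuclideanSpace ℝ (Fin m)) (β : ℝ), 0 < β →
      (f z + (β / 2) * ‖c z - y‖ ^ 2) - (f x + (β / 2) * ‖c x - y‖ ^ 2) ≤
        ⟪gradf x + β • (Jc x).adjoint (c x - y), z - x⟫ +
          ((L + (Lc * ‖c x - y‖ + Mc ^ 2) * β) / 2) * ‖z - x‖ ^ 2 := by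
  intro x hx z hz y β hβ
  have hseg : ∀ t ∈ Set.Icc (0:ℝ) 1, x + t • (z - x) ∈ D := fun t ht =>
    hD.add_smul_sub_mem hx hz ht
  have hsmulnorm : ∀ s t : ℝ,
      ‖(x + t • (z - x)) - (x + s • (z - x))‖ = |t - s| * ‖z - x‖ := by
    intro s t
    have h : (x + t • (z - x)) - (x + s • (z - x)) = (t - s) • (z - x) := by
      rw [sub_smul]; abel
    rw [h, norm_smul, Real.norm_eq_abs]
  -- Taylor bound for f
  have hTf : ‖f z - f x -
      (InnerProductSpace.toDual ℝ (EuclideanSpace ℝ (Fin n)) (gradf x)) (z - x)‖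
      ≤ L / 2 * ‖z - x‖ ^ 2 := by
    apply taylor_aux f
      (fun w => InnerProductSpace.toDual ℝ (EuclideanSpace ℝ (Fin n)) (gradf w)) x z L hL.le
      (fun w => (hf w).hasFDerivAt)
    intro s _ t _
    calc ‖InnerProductSpace.toDual ℝ (EuclideanSpace ℝ (Fin n)) (gradf (x + t • (z - x)))
          - InnerProductSpace.toDual ℝ (EuclideanSpace ℝ (Fin n)) (gradf (x + s • (z - x)))‖
        = ‖gradf (x + t • (z - x)) - gradf (x + s • (z - x))‖ := by
          rw [← map_sub, (InnerProductSpace.toDual ℝ (EuclideanSpace ℝ (Fin n))).norm_map]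
      _ ≤ L * ‖(x + t • (z - x)) - (x + s • (z - x))‖ := hLip _ _
      _ = L * (|t - s| * ‖z - x‖) := by rw [hsmulnorm]
      _ = L * |t - s| * ‖z - x‖ := by ring
  have hdesc : f z - f x ≤ ⟪gradf x, z - x⟫ + L / 2 * ‖z - x‖ ^ 2 := by
    rw [InnerProductSpace.toDual_apply_apply] at hTf
    have h2 : f z - f x - ⟪gradf x, z - x⟫ ≤ L / 2 * ‖z - x‖ ^ 2 :=
      le_trans (le_abs_self _) (by rw [← Real.norm_eq_abs]; exact hTf)
    linarith
  -- Taylor bound for c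
  have hTc : ‖c z - c x - Jc x (z - x)‖ ≤ Lc / 2 * ‖z - x‖ ^ 2 := by
    apply taylor_aux c Jc x z Lc hLc.le hc
    intro s hs t ht
    calc ‖Jc (x + t • (z - x)) - Jc (x + s • (z - x))‖
        ≤ Lc * ‖(x + t • (z - x)) - (x + s • (z - x))‖ :=
          hJLip _ (hseg t ht) _ (hseg s hs)
      _ = Lc * (|t - s| * ‖z - x‖) := by rw [hsmulnorm]
      _ = Lc * |t - s| * ‖z - x‖ := by ring
  -- mean value bound for c
  have hMV : ‖c z - c x‖ ≤ Mc * ‖z - x‖ :=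
    hD.norm_image_sub_le_of_norm_hasFDerivWithin_le
      (fun w _ => (hc w).hasFDerivWithinAt) hJb hx hz
  have hvsq : ‖c z - y‖ ^ 2 = ‖c x - y‖ ^ 2 + 2 * ⟪c x - y, c z - c x⟫ + ‖c z - c x‖ ^ 2 := by
    have h : c z - y = (c x - y) + (c z - c x) := by abel
    rw [h, norm_add_sq_real]
  have hiw : ⟪c x - y, c z - c x⟫
      = ⟪(Jc x).adjoint (c x - y), z - x⟫ + ⟪c x - y, c z - c x - Jc x (z - x)⟫ := by
    rw [ContinuousLinearMap.adjoint_inner_left, ← inner_add_right]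
    congr 1
    abel
  have hur : ⟪c x - y, c z - c x - Jc x (z - x)⟫ ≤ ‖c x - y‖ * (Lc / 2 * ‖z - x‖ ^ 2) :=
    le_trans (real_inner_le_norm _ _)
      (mul_le_mul_of_nonneg_left hTc (norm_nonneg _))
  have hw2 : ‖c z - c x‖ ^ 2 ≤ Mc ^ 2 * ‖z - x‖ ^ 2 := by
    nlinarith [hMV, norm_nonneg (c z - c x), norm_nonneg (z - x), hMc.le]
  have hexp : ⟪gradf x + β • (Jc x).adjoint (c x - y), z - x⟫
      = ⟪gradf x, z - x⟫ + β * ⟪(Jc x).adjoint (c x - y), z - x⟫ := by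
    rw [inner_add_left, real_inner_smul_left]
  rw [hexp, hvsq, hiw]
  nlinarith [mul_le_mul_of_nonneg_left hur hβ.le, mul_le_mul_of_nonneg_left hw2 hβ.le,
    hdesc, norm_nonneg (c x - y), norm_nonneg (z - x)]
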